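/- The function x₂(t) = e^{t/2}cos(t) is a solution of the Marcus–Yamabe equation (8 − 6 sin 2t)x'' + (4 + 12 cos 2t − 3 sin 2t)x' + (−5 + 3 cos 2t + 9 sin 2t)x = 0; in particular this equation has an unbounded solution even though both Floquet-type exponents of the associated system have eigenvalue real parts negative. -/

import Mathlib

lemma aux_hd1 (t : ℝ) : HasDerivAt (fun t : ℝ => Real.exp (t/2) * Real.cos t)
    (Real.exp (t/2) * (Real.cos t / 2 - Real.sin t)) t := by
  have he : HasDerivAt (fun t : ℝ => Real.exp (t/2)) (Real.exp (t/2) * (1/2)) t := by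
    have := (Real.hasDerivAt_exp (t/2)).comp t ((hasDerivAt_id t).div_const 2)
    simpa [Function.comp_def] using this
  have := he.mul (Real.hasDerivAt_cos t)
  exact this.congr_deriv (by ring)

lemma aux_hd2 (t : ℝ) : HasDerivAt (fun t : ℝ => Real.exp (t/2) * (Real.cos t / 2 - Real.sin t))
    (Real.exp (t/2) * (-3/4 * Real.cos t - Real.sin t)) t := by
  have he : HasDerivAt (fun t : ℝ => Real.exp (t/2)) (Real.exp (t/2) * (1/2)) t := by
    have := (Real.hasDerivAt_exp (t/2)).comp t ((hasDerivAt_id t).div_const 2)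
    simpa [Function.comp_def] using this
  have hc : HasDerivAt (fun t : ℝ => Real.cos t / 2 - Real.sin t)
      (-Real.sin t / 2 - Real.cos t) t :=
    ((Real.hasDerivAt_cos t).div_const 2).sub (Real.hasDerivAt_sin t)
  have := he.mul hc
  exact this.congr_deriv (by ring)

theorem stmt_15 (x₂ : ℝ → ℝ) (hx₂ : ∀ t, x₂ t = Real.exp (t/2) * Real.cos t) :
    (∀ t, (8 - 6 * Real.sin (2*t)) * (deriv (deriv x₂) t)
      + (4 + 12 * Real.cos (2*t) - 3 * Real.sin (2*t)) * (deriv x₂ t)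
      + (-5 + 3 * Real.cos (2*t) + 9 * Real.sin (2*t)) * x₂ t = 0) ∧
    ¬ BddAbove ((fun t => |x₂ t|) '' Set.Ici (0:ℝ)) := by
  have hfun : x₂ = fun t => Real.exp (t/2) * Real.cos t := funext hx₂
  have hd1 : deriv x₂ = fun t => Real.exp (t/2) * (Real.cos t / 2 - Real.sin t) := by
    funext t
    rw [hfun]
    exact (aux_hd1 t).deriv
  have hd2 : ∀ t, deriv (deriv x₂) t = Real.exp (t/2) * (-3/4 * Real.cos t - Real.sin t) := by
    intro t
    rw [hd1]
    exact (aux_hd2 t).deriv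
  constructor
  · intro t
    rw [hd2, hd1, hx₂, Real.sin_two_mul, Real.cos_two_mul']
    simp only []
    have h := Real.sin_sq_add_cos_sq t
    linear_combination (Real.exp (t/2) * (12 * Real.sin t + 9 * Real.cos t)) * h
  · intro ⟨M, hM⟩
    set n : ℕ := ⌈M⌉₊ + 1 with hn
    have ht : ((n : ℝ) * (2 * Real.pi)) ∈ Set.Ici (0:ℝ) := by
      have := Real.pi_pos
      have : (0:ℝ) ≤ (n : ℝ) * (2 * Real.pi) := by positivity
      exact Set.mem_Ici.mpr this
    have hmem : |x₂ ((n : ℝ) * (2 * Real.pi))| ∈ (fun t => |x₂ t|) '' Set.Ici (0:ℝ) :=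
      ⟨_, ht, rfl⟩
    have hle := hM hmem
    have hcos : Real.cos ((n : ℝ) * (2 * Real.pi)) = 1 := Real.cos_nat_mul_two_pi n
    have hval : x₂ ((n : ℝ) * (2 * Real.pi)) = Real.exp ((n : ℝ) * Real.pi) := by
      rw [hx₂, hcos, mul_one]
      ring_nf
    have hbig : (n : ℝ) ≤ Real.exp ((n : ℝ) * Real.pi) := by
      have h1 : (n : ℝ) * Real.pi + 1 ≤ Real.exp ((n : ℝ) * Real.pi) :=
        Real.add_one_le_exp _
      have h2 : (n : ℝ) ≤ (n : ℝ) * Real.pi + 1 := by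
        nlinarith [Real.pi_gt_three, Nat.cast_nonneg (α := ℝ) n]
      linarith
    have hMn : M < (n : ℝ) := by
      have := Nat.lt_ceil.mpr (lt_add_one (⌈M⌉₊ : ℝ))
      have h3 : M ≤ (⌈M⌉₊ : ℝ) := Nat.le_ceil M
      have h4 : ((⌈M⌉₊ : ℝ)) < n := by exact_mod_cast Nat.lt_succ_self _
      linarith
    have : |x₂ ((n : ℝ) * (2 * Real.pi))| = Real.exp ((n : ℝ) * Real.pi) := by
      rw [hval, abs_of_pos (Real.exp_pos _)]
    linarith [hle, hbig, this ▸ hle]
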